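/- Let Γ be an infinite virtually cyclic group acting freely and minimally by homeomorphisms on a nonempty compact Hausdorff space X. Then the dynamic asymptotic dimension of the action equals 1. -/

import Mathlib

open Pointwise

/-- The set F(U,E): elements `g = gₙ⋯g₁` with each `gⱼ ∈ E` such that for some `x ∈ U`
all partial translates `gⱼ⋯g₁ • x` (j = 1,…,n) remain in `U`. -/
def dynF {Γ X : Type*} [Group Γ] [MulAction Γ X] (U : Set X) (E : Set Γ) : Set Γ :=
  {g | ∃ L : List Γ, L ≠ [] ∧ (∀ h ∈ L, h ∈ E) ∧ g = L.reverse.prod ∧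
    ∃ x ∈ U, ∀ j : ℕ, 1 ≤ j → j ≤ L.length → (L.take j).reverse.prod • x ∈ U}

/-- The marker property for an action. -/
def MarkerProperty (Γ X : Type*) [Group Γ] [MulAction Γ X] [TopologicalSpace X] : Prop :=
  ∀ F : Finset Γ, ∃ U : Set X, IsOpen U ∧
    (F : Set Γ).PairwiseDisjoint (fun g => g • U) ∧ (⋃ g : Γ, g • U) = Set.univ

/-- The dynamic asymptotic dimension is at most `d`. -/
def DadLE (Γ X : Type*) [Group Γ] [MulAction Γ X] [TopologicalSpace X] (d : ℕ) : Prop :=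
  ∀ E : Finset Γ, ∃ U : Fin (d + 1) → Set X, (∀ i, IsOpen (U i)) ∧
    (⋃ i, U i) = Set.univ ∧ ∀ i, (dynF (U i) (E : Set Γ)).Finite

/-- The dynamic asymptotic dimension, as an extended natural number (`⊤` if no `d` works). -/
noncomputable def dad (Γ X : Type*) [Group Γ] [MulAction Γ X] [TopologicalSpace X] : ℕ∞ :=
  sInf ((fun d : ℕ => (d : ℕ∞)) '' {d : ℕ | DadLE Γ X d})

/-- A group is virtually cyclic if it has a cyclic subgroup of finite index. -/
def IsVirtuallyCyclic (Γ : Type*) [Group Γ] : Prop :=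
  ∃ H : Subgroup Γ, IsCyclic H ∧ H.FiniteIndex

/-- The covering dimension of `X` is at most `n`: every open cover admits an open
refinement covering `X` in which every point belongs to at most `n+1` members. -/
def CovDimLE (X : Type*) [TopologicalSpace X] (n : ℕ) : Prop :=
  ∀ 𝒰 : Set (Set X), (∀ U ∈ 𝒰, IsOpen U) → ⋃₀ 𝒰 = Set.univ →
    ∃ 𝒱 : Set (Set X), (∀ V ∈ 𝒱, IsOpen V) ∧ ⋃₀ 𝒱 = Set.univ ∧
      (∀ V ∈ 𝒱, ∃ U ∈ 𝒰, V ⊆ U) ∧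
      ∀ x : X, ∃ s : Finset (Set X), {V ∈ 𝒱 | x ∈ V} ⊆ ↑s ∧ s.card ≤ n + 1

/-! ### Auxiliary material -/

/-- Interface: a proper surjective "quasi-character" on a virtually cyclic group. -/
structure GoodTau (Γ : Type*) [Group Γ] where
  tau : Γ → ℤ
  B : ℤ
  hB : 0 ≤ B
  h1 : tau 1 = 0
  T1 : ∀ g p : Γ, |tau (g * p) - tau p| ≤ |tau g| + B
  T2 : ∀ g p : Γ, |tau g| ≤ |tau (g * p) - tau p| + B
  fin : ∀ R : ℤ, {γ : Γ | |tau γ| ≤ R}.Finite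
  surj : ∀ n : ℤ, ∃ p : Γ, tau p = n

lemma aux_infinite_subgroup {Γ : Type*} [Group Γ] [Infinite Γ] (H : Subgroup Γ)
    [H.FiniteIndex] : Infinite H := by
  by_contra h
  rw [not_infinite_iff_finite] at h
  haveI : Finite (Γ ⧸ H) := Subgroup.finite_quotient_of_finiteIndex
  have : Finite Γ := Finite.of_equiv ((Γ ⧸ H) × H) Subgroup.groupEquivQuotientProdSubgroup.symm
  exact not_finite Γ

/-- From virtual cyclicity: an infinite-order element generating a finite-index subgroup. -/
lemma aux_exists_gen {Γ : Type*} [Group Γ] [Infinite Γ] (hvc : IsVirtuallyCyclic Γ) :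
    ∃ t : Γ, ¬ IsOfFinOrder t ∧ (Subgroup.zpowers t).FiniteIndex := by
  obtain ⟨H, hcyc, hfi⟩ := hvc
  haveI := hfi
  haveI : Infinite H := aux_infinite_subgroup H
  obtain ⟨g, hg⟩ := @IsCyclic.exists_generator H _ hcyc
  refine ⟨(g : Γ), ?_, ?_⟩
  · intro hfin
    have h1 : (Subgroup.zpowers (g : Γ) : Set Γ).Finite := hfin.finite_zpowers
    have h2 : H ≤ Subgroup.zpowers (g : Γ) := by
      intro x hx
      obtain ⟨n, hn⟩ := Subgroup.mem_zpowers_iff.1 (hg ⟨x, hx⟩)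
      exact Subgroup.mem_zpowers_iff.2 ⟨n, by
        have := congrArg (Subtype.val) hn
        simpa using this⟩
    have : (H : Set Γ).Finite := h1.subset h2
    haveI := this.to_subtype
    exact not_finite H
  · have h2 : H = Subgroup.zpowers (g : Γ) := by
      apply le_antisymm
      · intro x hx
        obtain ⟨n, hn⟩ := Subgroup.mem_zpowers_iff.1 (hg ⟨x, hx⟩)
        exact Subgroup.mem_zpowers_iff.2 ⟨n, by
          have := congrArg (Subtype.val) hn
          simpa using this⟩
      · exact Subgroup.zpowers_le.2 g.2
    rw [← h2]; exact hfi

/-- An infinite-order element whose cyclic subgroup is normal of finite index. -/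
lemma aux_exists_normal_gen {Γ : Type*} [Group Γ] [Infinite Γ] (hvc : IsVirtuallyCyclic Γ) :
    ∃ t : Γ, ¬ IsOfFinOrder t ∧ (Subgroup.zpowers t).Normal ∧ (Subgroup.zpowers t).FiniteIndex := by
  obtain ⟨t, ht, hfi⟩ := aux_exists_gen hvc
  haveI := hfi
  set H := Subgroup.zpowers t with hH
  set K := H.normalCore with hK
  haveI : K.FiniteIndex := Subgroup.finiteIndex_normalCore H
  haveI : K.Normal := Subgroup.normalCore_normal H
  haveI : Infinite K := aux_infinite_subgroup K
  have hKH : K ≤ H := Subgroup.normalCore_le H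
  have htinj : Function.Injective fun n : ℤ => t ^ n := injective_zpow_iff_not_isOfFinOrder.2 ht
  let Z : AddSubgroup ℤ :=
    { carrier := {n : ℤ | t ^ n ∈ K}
      zero_mem' := by simp [Subgroup.one_mem]
      add_mem' := by
        intro a b ha hb
        simp only [Set.mem_setOf_eq, zpow_add] at *
        exact K.mul_mem ha hb
      neg_mem' := by
        intro a ha
        simp only [Set.mem_setOf_eq, zpow_neg] at *
        exact K.inv_mem ha }
  obtain ⟨a, haZ⟩ := Int.subgroup_cyclic Z
  have haK : t ^ a ∈ K := by
    have : a ∈ Z := haZ ▸ AddSubgroup.mem_closure_singleton.2 ⟨1, one_smul _ _⟩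
    exact this
  have hmem : ∀ k ∈ K, ∃ n : ℤ, t ^ n = k ∧ n ∈ Z := by
    intro k hk
    obtain ⟨n, hn⟩ := Subgroup.mem_zpowers_iff.1 (hKH hk)
    exact ⟨n, hn, by simpa [Z, Set.mem_setOf_eq, hn] using hk⟩
  have ha0 : a ≠ 0 := by
    intro h0
    subst h0
    have : (K : Set Γ).Finite := by
      have : (K : Set Γ) ⊆ {1} := by
        intro k hk
        obtain ⟨n, hn, hnZ⟩ := hmem k hk
        have : n ∈ AddSubgroup.closure ({(0:ℤ)} : Set ℤ) := haZ ▸ hnZ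
        rw [AddSubgroup.closure_singleton_zero] at this
        simp only [AddSubgroup.mem_bot] at this
        subst this
        simpa using hn.symm
      exact (Set.finite_singleton 1).subset this
    haveI := this.to_subtype
    exact not_finite K
  have hKeq : Subgroup.zpowers (t ^ a) = K := by
    apply le_antisymm
    · exact Subgroup.zpowers_le.2 haK
    · intro k hk
      obtain ⟨n, hn, hnZ⟩ := hmem k hk
      have : n ∈ AddSubgroup.closure ({a} : Set ℤ) := haZ ▸ hnZ
      obtain ⟨m, hm⟩ := AddSubgroup.mem_closure_singleton.1 this
      refine Subgroup.mem_zpowers_iff.2 ⟨m, ?_⟩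
      rw [← zpow_mul, ← hn, ← hm, smul_eq_mul, mul_comm]
  refine ⟨t ^ a, ?_, by rw [hKeq]; infer_instance, by rw [hKeq]; infer_instance⟩
  · intro hfin
    have : (Subgroup.zpowers (t ^ a) : Set Γ).Finite := hfin.finite_zpowers
    rw [hKeq] at this
    haveI := this.to_subtype
    exact not_finite K

lemma exists_goodTau' {Γ : Type*} [Group Γ] (t₀ : Γ) (ht : ¬ IsOfFinOrder t₀)
    (hN : (Subgroup.zpowers t₀).Normal) (hFI : (Subgroup.zpowers t₀).FiniteIndex) :
    Nonempty (GoodTau Γ) := by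
  haveI := hN; haveI := hFI
  set Nsub := Subgroup.zpowers t₀ with hNsub
  have hinj : Function.Injective fun n : ℤ => t₀ ^ n := injective_zpow_iff_not_isOfFinOrder.2 ht
  have uniq : ∀ {n m : ℤ}, t₀ ^ n = t₀ ^ m → n = m := fun h => hinj h
  haveI : Finite (Γ ⧸ Nsub) := Subgroup.finite_quotient_of_finiteIndex
  set sec : Γ → Γ := fun γ => (QuotientGroup.mk (s := Nsub) γ).out with hsecdef
  have hsame : ∀ γ δ : Γ, (QuotientGroup.mk (s := Nsub) γ) = QuotientGroup.mk δ →
      ∃ n : ℤ, t₀ ^ n = γ * δ⁻¹ := by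
    intro γ δ h
    rw [QuotientGroup.eq] at h
    have h2 : δ * (γ⁻¹ * δ) * δ⁻¹ ∈ Nsub := hN.conj_mem _ h δ
    have h3 : (δ * (γ⁻¹ * δ) * δ⁻¹)⁻¹ ∈ Nsub := Nsub.inv_mem h2
    obtain ⟨n, hn⟩ := Subgroup.mem_zpowers_iff.1 h3
    refine ⟨n, ?_⟩
    rw [hn]; group
  have hsec : ∀ γ : Γ, ∃ n : ℤ, t₀ ^ n = γ * (sec γ)⁻¹ := by
    intro γ
    exact hsame γ (sec γ) (by rw [hsecdef]; exact (QuotientGroup.out_eq' _).symm)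
  choose ρ hρ using hsec
  have decomp : ∀ γ : Γ, t₀ ^ ρ γ * sec γ = γ := by
    intro γ; rw [hρ]; group
  have hconj : ∀ γ : Γ, ∃ e : ℤ, t₀ ^ e = γ * t₀ * γ⁻¹ := by
    intro γ
    exact Subgroup.mem_zpowers_iff.1 (hN.conj_mem t₀ (Subgroup.mem_zpowers t₀) γ)
  choose ε hε using hconj
  have conj_zpow' : ∀ (γ : Γ) (m : ℤ), γ * t₀ ^ m * γ⁻¹ = t₀ ^ (ε γ * m) := by
    intro γ m
    rw [zpow_mul, hε, conj_zpow]
  have epsMul : ∀ g p : Γ, ε (g * p) = ε g * ε p := by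
    intro g p
    apply uniq
    calc t₀ ^ ε (g * p) = (g * p) * t₀ * (g * p)⁻¹ := hε _
      _ = g * (p * t₀ * p⁻¹) * g⁻¹ := by group
      _ = g * t₀ ^ ε p * g⁻¹ := by rw [hε]
      _ = t₀ ^ (ε g * ε p) := conj_zpow' g (ε p)
  have eps_one : ε 1 = 1 := by
    apply uniq
    rw [hε]; group
  have eps_pm : ∀ γ : Γ, ε γ = 1 ∨ ε γ = -1 := by
    intro γ
    have : ε γ * ε γ⁻¹ = 1 := by rw [← epsMul, mul_inv_cancel, eps_one]
    exact Int.isUnit_iff.1 (IsUnit.of_mul_eq_one _ this)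
  have abs_eps : ∀ γ : Γ, |ε γ| = 1 := by
    intro γ; rcases eps_pm γ with h | h <;> simp [h]
  have eps_sq : ∀ γ : Γ, ε γ * ε γ = 1 := by
    intro γ; rcases eps_pm γ with h | h <;> simp [h]
  have eps_tpow : ∀ m : ℤ, ε (t₀ ^ m) = 1 := by
    intro m
    apply uniq
    rw [hε, zpow_one]
    have h : t₀ ^ m * t₀ = t₀ * t₀ ^ m := by
      rw [← zpow_one_add, ← zpow_add_one, add_comm]
    rw [h]; group
  have eps_sec : ∀ γ : Γ, ε (sec γ) = ε γ := by
    intro γ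
    have h1 : sec γ = t₀ ^ (-ρ γ) * γ := by
      rw [zpow_neg, hρ]; group
    rw [h1, epsMul, eps_tpow, one_mul]
  have hout : ∀ c d : Γ ⧸ Nsub, ∃ n : ℤ, t₀ ^ n = c.out * d.out * ((c * d).out)⁻¹ := by
    intro c d
    apply hsame
    rw [QuotientGroup.mk_mul, QuotientGroup.out_eq', QuotientGroup.out_eq',
      QuotientGroup.out_eq']
  choose kk hkk using hout
  have key : ∀ g p : Γ, ρ (g * p) = ρ g + ε g * ρ p
      + kk (QuotientGroup.mk g) (QuotientGroup.mk p) := by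
    intro g p
    set c := QuotientGroup.mk (s := Nsub) g with hc
    set d := QuotientGroup.mk (s := Nsub) p with hd
    have hsg : sec g = c.out := rfl
    have hsp : sec p = d.out := rfl
    have hm : sec (g * p) = (c * d).out := by
      show (QuotientGroup.mk (s := Nsub) (g * p)).out = (c * d).out
      rw [QuotientGroup.mk_mul]
    have e2 : g * p = t₀ ^ (ρ g + ε g * ρ p + kk c d) * sec (g * p) := by
      conv_lhs => rw [← decomp g, ← decomp p]
      have h1 : sec g * t₀ ^ ρ p = t₀ ^ (ε g * ρ p) * sec g := by
        have h0 := conj_zpow' (sec g) (ρ p)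
        rw [eps_sec] at h0
        calc sec g * t₀ ^ ρ p = (sec g * t₀ ^ ρ p * (sec g)⁻¹) * sec g := by group
          _ = t₀ ^ (ε g * ρ p) * sec g := by rw [h0]
      have h2 : sec g * sec p = t₀ ^ kk c d * sec (g * p) := by
        rw [hsg, hsp, hm, hkk c d]; group
      calc t₀ ^ ρ g * sec g * (t₀ ^ ρ p * sec p)
          = t₀ ^ ρ g * (sec g * t₀ ^ ρ p) * sec p := by group
        _ = t₀ ^ ρ g * (t₀ ^ (ε g * ρ p) * sec g) * sec p := by rw [h1]
        _ = t₀ ^ ρ g * t₀ ^ (ε g * ρ p) * (sec g * sec p) := by group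
        _ = t₀ ^ ρ g * t₀ ^ (ε g * ρ p) * (t₀ ^ kk c d * sec (g * p)) := by rw [h2]
        _ = t₀ ^ (ρ g + ε g * ρ p + kk c d) * sec (g * p) := by
            rw [zpow_add, zpow_add]; group
    exact uniq (mul_right_cancel ((decomp (g * p)).trans e2))
  haveI : Fintype (Γ ⧸ Nsub) := Fintype.ofFinite _
  set Bn : ℕ := Finset.univ.sup
    (fun cd : (Γ ⧸ Nsub) × (Γ ⧸ Nsub) => (kk cd.1 cd.2).natAbs) with hBn
  have hkkB : ∀ c d, |kk c d| ≤ (Bn : ℤ) := by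
    intro c d
    rw [Int.abs_eq_natAbs]
    exact_mod_cast Finset.le_sup (f := fun cd : (Γ ⧸ Nsub) × (Γ ⧸ Nsub) =>
      (kk cd.1 cd.2).natAbs) (Finset.mem_univ (c, d))
  set c1 : ℤ := ρ 1 with hc1
  set τ : Γ → ℤ := fun γ => ε γ * ρ γ - c1 with hτ
  have key2 : ∀ g p : Γ, τ (g * p) - τ p
      = ε g * ε p * (ρ g + kk (QuotientGroup.mk g) (QuotientGroup.mk p)) := by
    intro g p
    have h1 : τ (g * p) - τ p = ε (g * p) * ρ (g * p) - ε p * ρ p := by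
      simp only [hτ]; ring
    rw [h1, epsMul, key]
    linear_combination (ρ p * ε p) * eps_sq g
  have key3 : ∀ g p : Γ, |τ (g * p) - τ p|
      = |ρ g + kk (QuotientGroup.mk g) (QuotientGroup.mk p)| := by
    intro g p
    rw [key2, abs_mul, abs_mul, abs_eps, abs_eps, one_mul, one_mul]
  have habsρ : ∀ γ : Γ, |ρ γ| = |τ γ + c1| := by
    intro γ
    have h : τ γ + c1 = ε γ * ρ γ := by simp [hτ]
    rw [h, abs_mul, abs_eps, one_mul]
  refine ⟨⟨τ, (Bn : ℤ) + |c1|, by positivity, ?_, ?_, ?_, ?_, ?_⟩⟩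
  · simp only [hτ, eps_one, one_mul, hc1, sub_self]
  · intro g p
    rw [key3]
    calc |ρ g + kk _ _| ≤ |ρ g| + |kk _ _| := abs_add_le _ _
      _ ≤ |τ g + c1| + (Bn : ℤ) := by
          rw [← habsρ]; exact add_le_add le_rfl (hkkB _ _)
      _ ≤ (|τ g| + |c1|) + (Bn : ℤ) := add_le_add (abs_add_le _ _) le_rfl
      _ = |τ g| + ((Bn : ℤ) + |c1|) := by ring
  · intro g p
    calc |τ g| = |(τ g + c1) + (-c1)| := by ring_nf
      _ ≤ |τ g + c1| + |(-c1)| := abs_add_le _ _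
      _ = |ρ g| + |c1| := by rw [← habsρ, abs_neg]
      _ = |(ρ g + kk (QuotientGroup.mk g) (QuotientGroup.mk p)) +
            (- kk (QuotientGroup.mk g) (QuotientGroup.mk p))| + |c1| := by ring_nf
      _ ≤ (|ρ g + kk (QuotientGroup.mk g) (QuotientGroup.mk p)| +
            |(- kk (QuotientGroup.mk g) (QuotientGroup.mk p))|) + |c1| :=
          add_le_add (abs_add_le _ _) le_rfl
      _ ≤ (|τ (g * p) - τ p| + (Bn : ℤ)) + |c1| := by
          rw [← key3, abs_neg]
          exact add_le_add (add_le_add le_rfl (hkkB _ _)) le_rfl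
      _ = |τ (g * p) - τ p| + ((Bn : ℤ) + |c1|) := by ring
  · intro R
    have hsub : {γ : Γ | |τ γ| ≤ R} ⊆
        (fun pr : ℤ × (Γ ⧸ Nsub) => t₀ ^ pr.1 * pr.2.out) ''
          (Set.Icc (-(R + |c1|)) (R + |c1|) ×ˢ (Set.univ : Set (Γ ⧸ Nsub))) := by
      intro γ hγ
      refine ⟨(ρ γ, QuotientGroup.mk γ), ⟨?_, Set.mem_univ _⟩, decomp γ⟩
      have h1 : |ρ γ| ≤ R + |c1| := by
        rw [habsρ]
        calc |τ γ + c1| ≤ |τ γ| + |c1| := abs_add_le _ _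
          _ ≤ R + |c1| := add_le_add hγ le_rfl
      exact abs_le.1 h1
    exact (((Set.finite_Icc _ _).prod Set.finite_univ).image _).subset hsub
  · intro n
    refine ⟨t₀ ^ n, ?_⟩
    have hsec1 : sec (1 : Γ) = (t₀ ^ c1)⁻¹ := by
      have h := decomp (1 : Γ)
      rw [← hc1] at h
      calc sec (1 : Γ) = (t₀ ^ c1)⁻¹ * (t₀ ^ c1 * sec 1) := by group
        _ = (t₀ ^ c1)⁻¹ * 1 := by rw [h]
        _ = (t₀ ^ c1)⁻¹ := mul_one _
    have hsecpow : sec (t₀ ^ n) = sec 1 := by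
      show (QuotientGroup.mk (s := Nsub) (t₀ ^ n)).out = (QuotientGroup.mk (s := Nsub) 1).out
      congr 1
      rw [QuotientGroup.eq]
      refine Subgroup.mem_zpowers_iff.2 ⟨-n, ?_⟩
      group
    have hrho : ρ (t₀ ^ n) = n + c1 := by
      apply uniq
      have h := decomp (t₀ ^ n)
      rw [hsecpow, hsec1] at h
      calc t₀ ^ ρ (t₀ ^ n) = (t₀ ^ ρ (t₀ ^ n) * (t₀ ^ c1)⁻¹) * t₀ ^ c1 := by group
        _ = t₀ ^ n * t₀ ^ c1 := by rw [h]
        _ = t₀ ^ (n + c1) := by rw [← zpow_add]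
    simp only [hτ, eps_tpow, hrho, one_mul]
    ring

lemma aux_marker {Γ X : Type*} [Group Γ] [TopologicalSpace X] [CompactSpace X] [T2Space X]
    [Nonempty X] [MulAction Γ X] [ContinuousConstSMul Γ X]
    (hfree : ∀ (g : Γ) (x : X), g • x = x → g = 1)
    (hmin : ∀ x : X, Dense (MulAction.orbit Γ x)) (F : Finset Γ) :
    ∃ (V C V' : Set X) (S : Finset Γ),
      IsOpen V ∧ IsClosed C ∧ V' ⊆ C ∧ C ⊆ V ∧
      (∀ g ∈ F, g ≠ 1 → ∀ y ∈ V, g • y ∉ V) ∧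
      (⋃ γ ∈ S, γ • V') = Set.univ := by
  classical
  obtain ⟨x₀⟩ := ‹Nonempty X›
  have sep' : ∀ g : Γ, ∃ W : Set X, IsOpen W ∧ x₀ ∈ W ∧ (g ≠ 1 → ∀ y ∈ W, g • y ∉ W) := by
    intro g
    by_cases hg : g = 1
    · exact ⟨Set.univ, isOpen_univ, trivial, fun h => absurd hg h⟩
    · have hne : x₀ ≠ g • x₀ := by
        intro h
        exact hg (hfree g x₀ h.symm)
      obtain ⟨W1, W2, hW1, hW2, hx1, hx2, hdisj⟩ := t2_separation hne
      refine ⟨W1 ∩ (fun y => g • y) ⁻¹' W2, hW1.inter (hW2.preimage (continuous_const_smul g)),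
        ⟨hx1, hx2⟩, fun _ y hy hgy => ?_⟩
      exact Set.disjoint_left.1 hdisj hgy.1 hy.2
  choose Vg hVo hVm hVs using sep'
  set V : Set X := ⋂ g ∈ F, Vg g with hV
  have hVopen : IsOpen V := isOpen_biInter_finset fun g _ => hVo g
  have hVx₀ : x₀ ∈ V := Set.mem_biInter fun g _ => hVm g
  have hVsep : ∀ g ∈ F, g ≠ 1 → ∀ y ∈ V, g • y ∉ V := by
    intro g hgF hg y hy hgy
    exact hVs g hg y (Set.mem_iInter₂.1 hy g hgF) (Set.mem_iInter₂.1 hgy g hgF)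
  have hcov : ∀ x : X, ∃ γ : Γ, γ • x ∈ V := by
    intro x
    obtain ⟨y, hyorb, hyV⟩ := (hmin x).exists_mem_open hVopen ⟨x₀, hVx₀⟩
    obtain ⟨γ, hγ⟩ := hyorb
    exact ⟨γ, by simp only [] at hγ; rw [hγ]; exact hyV⟩
  have step : ∀ x : X, ∃ (O : Set X) (γ : Γ), IsOpen O ∧ x ∈ O ∧
      ∀ y ∈ closure O, γ • y ∈ V := by
    intro x
    obtain ⟨γ, hγ⟩ := hcov x
    have hopen : IsOpen ((fun y => γ • y) ⁻¹' V) := hVopen.preimage (continuous_const_smul γ)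
    obtain ⟨O, hOo, hxO, hOcl⟩ := normal_exists_closure_subset (isClosed_singleton (x := x))
      hopen (by simpa using hγ)
    exact ⟨O, γ, hOo, by simpa using hxO, fun y hy => hOcl hy⟩
  choose O γf hOo hOm hOc using step
  obtain ⟨t, ht⟩ := IsCompact.elim_finite_subcover isCompact_univ O hOo
    (fun x _ => Set.mem_iUnion.2 ⟨x, hOm x⟩)
  refine ⟨V, ⋃ x ∈ t, γf x • closure (O x), ⋃ x ∈ t, γf x • O x,
    t.image fun x => (γf x)⁻¹, hVopen, ?_, ?_, ?_, hVsep, ?_⟩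
  · exact Set.Finite.isClosed_biUnion t.finite_toSet
      fun x _ => (isClosed_closure).smul (γf x)
  · exact Set.iUnion₂_mono fun x _ => Set.smul_set_mono subset_closure
  · intro z hz
    simp only [Set.mem_iUnion] at hz
    obtain ⟨x, _, y, hy, rfl⟩ := hz
    exact hOc x y hy
  · apply Set.eq_univ_of_forall
    intro z
    have := ht (Set.mem_univ z)
    simp only [Set.mem_iUnion] at this
    obtain ⟨x, hxt, hzO⟩ := this
    simp only [Set.mem_iUnion]
    refine ⟨(γf x)⁻¹, Finset.mem_image_of_mem _ hxt, ?_⟩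
    rw [Set.mem_smul_set_iff_inv_smul_mem]
    simp only [inv_inv]
    exact Set.mem_iUnion₂.2 ⟨x, hxt, Set.smul_mem_smul_set hzO⟩

lemma aux_partial_step {Γ : Type*} [Group Γ] (L : List Γ) (j : ℕ) (hj : j < L.length) :
    (L.take (j+1)).reverse.prod = L[j] * (L.take j).reverse.prod := by
  calc (L.take (j+1)).reverse.prod = ((L.take j) ++ [L[j]]).reverse.prod := by
        rw [List.take_succ, List.getElem?_eq_getElem hj]
        simp
    _ = (L[j] :: (L.take j).reverse).prod := by
        rw [List.reverse_append]
        simp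
    _ = L[j] * (L.take j).reverse.prod := List.prod_cons

/-- For a free minimal action of an infinite virtually cyclic group on a
nonempty compact Hausdorff space, the dynamic asymptotic dimension equals 1. -/
theorem dad_eq_one_of_free_minimal
    (Γ X : Type*) [Group Γ] [Infinite Γ]
    [TopologicalSpace X] [CompactSpace X] [T2Space X] [Nonempty X]
    [MulAction Γ X] [ContinuousConstSMul Γ X]
    (hvc : IsVirtuallyCyclic Γ)
    (hfree : ∀ (g : Γ) (x : X), g • x = x → g = 1)
    (hmin : ∀ x : X, Dense (MulAction.orbit Γ x)) :
    dad Γ X = 1 := by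
  classical
  obtain ⟨t₀, ht₀, hNor, hFI⟩ := aux_exists_normal_gen hvc
  obtain ⟨gt⟩ := exists_goodTau' t₀ ht₀ hNor hFI
  set τ := gt.tau with hτdef
  set B := gt.B with hBdef
  have hB0 : 0 ≤ B := gt.hB
  -- upper bound : DadLE Γ X 1
  have hDad1 : DadLE Γ X 1 := by
    intro E
    have hτ1 : τ 1 = 0 := gt.h1
    set Nn : ℕ := E.sup fun g => (τ g).natAbs with hNn
    have hNE : ∀ g ∈ E, |τ g| ≤ (Nn : ℤ) := by
      intro g hg
      rw [Int.abs_eq_natAbs]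
      exact_mod_cast Finset.le_sup (f := fun g => (τ g).natAbs) hg
    set K : ℤ := (Nn : ℤ) + B with hK
    have hK0 : 0 ≤ K := add_nonneg (Int.natCast_nonneg _) hB0
    set W : ℤ := K + B with hW
    have hW0 : 0 ≤ W := add_nonneg hK0 hB0
    set L : ℤ := W + 2*B + K with hL
    set F : Finset Γ := (gt.fin (2*L)).toFinset with hF
    have hFmem : ∀ γ : Γ, |τ γ| ≤ 2*L ↔ γ ∈ F := by
      intro γ
      rw [hF, Set.Finite.mem_toFinset, Set.mem_setOf_eq]
    obtain ⟨V, C, V', S, hVo, hCc, hV'C, hCV, hsep, hcover⟩ := aux_marker hfree hmin F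
    set Dn : ℕ := S.sup fun γ => (τ γ⁻¹).natAbs with hDn
    have hDS : ∀ γ ∈ S, |τ γ⁻¹| ≤ (Dn : ℤ) := by
      intro γ hγ
      rw [Int.abs_eq_natAbs]
      exact_mod_cast Finset.le_sup (f := fun γ : Γ => (τ γ⁻¹).natAbs) hγ
    set D : ℤ := (Dn : ℤ) + B with hD
    have hD0 : 0 ≤ D := add_nonneg (Int.natCast_nonneg _) hB0
    set U₀ : Set X := {y | ∃ γ : Γ, |τ γ| ≤ W ∧ γ • y ∈ V} with hU₀
    set U₁ : Set X := {y | ∀ γ : Γ, |τ γ| ≤ W → γ • y ∉ C} with hU₁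
    have hU₀o : IsOpen U₀ := by
      have heq : U₀ = ⋃ γ ∈ (gt.fin W).toFinset, (fun y => γ • y) ⁻¹' V := by
        ext y
        simp only [hU₀, Set.mem_setOf_eq, Set.mem_iUnion, Set.Finite.mem_toFinset,
          Set.mem_preimage, exists_prop]
        exact Iff.rfl
      rw [heq]
      exact isOpen_biUnion fun γ _ => hVo.preimage (continuous_const_smul γ)
    have hU₁o : IsOpen U₁ := by
      have heq : U₁ = ⋂ γ ∈ (gt.fin W).toFinset, (fun y => γ • y) ⁻¹' Cᶜ := by
        ext y
        simp only [hU₁, Set.mem_setOf_eq, Set.mem_iInter, Set.Finite.mem_toFinset,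
          Set.mem_preimage, Set.mem_compl_iff]
        exact Iff.rfl
      rw [heq]
      exact isOpen_biInter_finset fun γ _ => (hCc.isOpen_compl).preimage (continuous_const_smul γ)
    have sepV : ∀ (η η' : Γ) (x : X), η • x ∈ V → η' • x ∈ V →
        |τ η' - τ η| ≤ 2*L - B → η' = η := by
      intro η η' x hη hη' hle
      by_contra hne
      have hδ : |τ (η' * η⁻¹)| ≤ 2*L := by
        have h2 := gt.T2 (η' * η⁻¹) η
        rw [inv_mul_cancel_right] at h2
        calc |τ (η' * η⁻¹)| ≤ |τ η' - τ η| + B := h2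
          _ ≤ (2*L - B) + B := add_le_add hle le_rfl
          _ = 2*L := by ring
      have hmemF : η' * η⁻¹ ∈ F := (hFmem _).1 hδ
      have hne1 : η' * η⁻¹ ≠ 1 := by
        intro h
        exact hne (by rwa [mul_inv_eq_one] at h)
      apply hsep _ hmemF hne1 (η • x) hη
      rw [smul_smul, inv_mul_cancel_right]
      exact hη'
    have hfin₀ : (dynF U₀ (E : Set Γ)).Finite := by
      apply Set.Finite.subset (gt.fin (2*(W+B)))
      rintro g ⟨Lst, hLne, hLmem, hgeq, x, hxU, hchain⟩
      set p : ℕ → Γ := fun j => (Lst.take j).reverse.prod with hp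
      have hp0 : p 0 = 1 := by simp [hp]
      have hpmem : ∀ j, j ≤ Lst.length → p j • x ∈ U₀ := by
        intro j hj
        rcases Nat.eq_zero_or_pos j with rfl | hjpos
        · rw [hp0, one_smul]; exact hxU
        · exact hchain j hjpos hj
      have hstep : ∀ j, j < Lst.length → |τ (p (j+1)) - τ (p j)| ≤ K := by
        intro j hj
        have heq : p (j+1) = Lst[j] * p j := aux_partial_step Lst j hj
        rw [heq]
        calc |τ (Lst[j] * p j) - τ (p j)| ≤ |τ Lst[j]| + B := gt.T1 _ _
          _ ≤ (Nn : ℤ) + B := add_le_add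
              (hNE _ (Finset.mem_coe.1 (hLmem _ (List.getElem_mem hj)))) le_rfl
      have hwit : ∀ j, j ≤ Lst.length → ∃ γ, |τ γ| ≤ W ∧ (γ * p j) • x ∈ V := by
        intro j hj
        obtain ⟨γ, h1, h2⟩ := hpmem j hj
        exact ⟨γ, h1, by rw [mul_smul]; exact h2⟩
      choose w hw1 hw2 using hwit
      have hwdist : ∀ j (hj : j ≤ Lst.length), |τ (w j hj * p j) - τ (p j)| ≤ W + B := by
        intro j hj
        calc |τ (w j hj * p j) - τ (p j)| ≤ |τ (w j hj)| + B := gt.T1 _ _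
          _ ≤ W + B := add_le_add (hw1 j hj) le_rfl
      have hconst : ∀ j (hj : j ≤ Lst.length), w j hj * p j = w 0 (Nat.zero_le _) * p 0 := by
        intro j
        induction j with
        | zero => intro hj; rfl
        | succ j ih =>
          intro hj
          have hjle : j ≤ Lst.length := Nat.le_of_succ_le hj
          have hjlt : j < Lst.length := hj
          have hd1 := hwdist (j+1) hj
          have hd2 := hwdist j hjle
          have hd3 := hstep j hjlt
          have hdiff : |τ (w (j+1) hj * p (j+1)) - τ (w j hjle * p j)| ≤ 2*L - B := by
            have t1 : |τ (w (j+1) hj * p (j+1)) - τ (w j hjle * p j)|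
                ≤ |τ (w (j+1) hj * p (j+1)) - τ (p (j+1))|
                  + |τ (p (j+1)) - τ (w j hjle * p j)| := abs_sub_le _ _ _
            have t2 : |τ (p (j+1)) - τ (w j hjle * p j)|
                ≤ |τ (p (j+1)) - τ (p j)| + |τ (p j) - τ (w j hjle * p j)| := abs_sub_le _ _ _
            have t3 : |τ (p j) - τ (w j hjle * p j)| = |τ (w j hjle * p j) - τ (p j)| :=
              abs_sub_comm _ _
            rw [t3] at t2
            have : (W + B) + (K + (W + B)) ≤ 2*L - B := by
              rw [hL]; ring_nf; linarith [hB0, hK0]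
            linarith
          have := sepV (w j hjle * p j) (w (j+1) hj * p (j+1)) x (hw2 j hjle) (hw2 (j+1) hj) hdiff
          rw [this, ih hjle]
      have hbound : ∀ j (hj : j ≤ Lst.length), |τ (p j)| ≤ 2*(W+B) := by
        intro j hj
        have h1 := hwdist j hj
        rw [hconst j hj] at h1
        have hτp0 : τ (p 0) = 0 := by rw [hp0, hτ1]
        have h0 := hwdist 0 (Nat.zero_le _)
        rw [hτp0, sub_zero] at h0
        have h2 := abs_sub_le (τ (p j)) (τ (w 0 (Nat.zero_le _) * p 0)) 0
        simp only [sub_zero] at h2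
        have h3 : |τ (p j) - τ (w 0 (Nat.zero_le _) * p 0)|
            = |τ (w 0 (Nat.zero_le _) * p 0) - τ (p j)| := abs_sub_comm _ _
        rw [h3] at h2
        linarith [h1, h2, h0]
      have hgp : g = p Lst.length := by
        rw [hgeq, hp]
        simp
      rw [Set.mem_setOf_eq, hgp]
      exact hbound _ le_rfl
    have hfin₁ : (dynF U₁ (E : Set Γ)).Finite := by
      apply Set.Finite.subset (gt.fin (2*D+1))
      rintro g ⟨Lst, hLne, hLmem, hgeq, x, hxU, hchain⟩
      set p : ℕ → Γ := fun j => (Lst.take j).reverse.prod with hp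
      have hp0 : p 0 = 1 := by simp [hp]
      have hpmem : ∀ j, j ≤ Lst.length → p j • x ∈ U₁ := by
        intro j hj
        rcases Nat.eq_zero_or_pos j with rfl | hjpos
        · rw [hp0, one_smul]; exact hxU
        · exact hchain j hjpos hj
      have hstep : ∀ j, j < Lst.length → |τ (p (j+1)) - τ (p j)| ≤ K := by
        intro j hj
        have heq : p (j+1) = Lst[j] * p j := aux_partial_step Lst j hj
        rw [heq]
        calc |τ (Lst[j] * p j) - τ (p j)| ≤ |τ Lst[j]| + B := gt.T1 _ _
          _ ≤ (Nn : ℤ) + B := add_le_add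
              (hNE _ (Finset.mem_coe.1 (hLmem _ (List.getElem_mem hj)))) le_rfl
      have hfar : ∀ η : Γ, η • x ∈ C → ∀ j, j ≤ Lst.length → K + 1 ≤ |τ η - τ (p j)| := by
        intro η hη j hj
        by_contra hcon
        push_neg at hcon
        have hcon' : |τ η - τ (p j)| ≤ K := Int.lt_add_one_iff.1 hcon
        have hδ : |τ (η * (p j)⁻¹)| ≤ W := by
          have h2 := gt.T2 (η * (p j)⁻¹) (p j)
          rw [inv_mul_cancel_right] at h2
          calc |τ (η * (p j)⁻¹)| ≤ |τ η - τ (p j)| + B := h2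
            _ ≤ K + B := add_le_add hcon' le_rfl
            _ = W := hW.symm
        have h5 : ∀ γ : Γ, |τ γ| ≤ W → γ • (p j • x) ∉ C := hpmem j hj
        apply h5 (η * (p j)⁻¹) hδ
        rw [smul_smul, inv_mul_cancel_right]
        exact hη
      have hcross : ∀ η : Γ, η • x ∈ C → ∀ j, j ≤ Lst.length →
          (τ η < τ (p j) ↔ τ η < 0) := by
        intro η hη j
        induction j with
        | zero =>
          intro hj
          rw [hp0, hτ1]
        | succ j ih =>
          intro hj
          have hjle : j ≤ Lst.length := Nat.le_of_succ_le hj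
          have hstepj := hstep j hj
          have hfar1 := hfar η hη j hjle
          have hfar2 := hfar η hη (j+1) hj
          rw [← ih hjle]
          have ha3 := abs_le.1 hstepj
          constructor
          · intro h1
            by_contra h2
            push_neg at h2
            have a1 : K + 1 ≤ τ η - τ (p j) := by
              rwa [abs_of_nonneg (by linarith)] at hfar1
            have a2 : K + 1 ≤ τ (p (j+1)) - τ η := by
              rw [abs_of_nonpos (by linarith)] at hfar2
              linarith
            linarith [ha3.2]
          · intro h1
            by_contra h2
            push_neg at h2
            have a1 : K + 1 ≤ τ (p j) - τ η := by
              rw [abs_of_nonpos (by linarith)] at hfar1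
              linarith
            have a2 : K + 1 ≤ τ η - τ (p (j+1)) := by
              rwa [abs_of_nonneg (by linarith)] at hfar2
            linarith [ha3.1]
      have hCwit : ∀ m : ℤ, ∃ η : Γ, η • x ∈ C ∧ |τ η - m| ≤ D := by
        intro m
        obtain ⟨q, hq⟩ := gt.surj m
        have hqx : q • x ∈ ⋃ γ ∈ S, γ • V' := by
          rw [hcover]; trivial
        obtain ⟨γ, hγS, hmemq⟩ := Set.mem_iUnion₂.1 hqx
        refine ⟨γ⁻¹ * q, ?_, ?_⟩
        · rw [mul_smul]
          exact hV'C (by rwa [← Set.mem_smul_set_iff_inv_smul_mem])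
        · have h1 := gt.T1 γ⁻¹ q
          rw [← hq]
          calc |τ (γ⁻¹ * q) - τ q| ≤ |τ γ⁻¹| + B := h1
            _ ≤ (Dn : ℤ) + B := add_le_add (hDS γ hγS) le_rfl
            _ = D := hD.symm
      have hub : ∀ j, j ≤ Lst.length → τ (p j) ≤ 2*D + 1 := by
        intro j hj
        obtain ⟨η, hηC, hηd⟩ := hCwit (D + 1)
        have hηb := abs_le.1 hηd
        have hpos : ¬ (τ η < 0) := by linarith [hηb.1]
        have h3 : ¬ (τ η < τ (p j)) := fun hh => hpos ((hcross η hηC j hj).1 hh)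
        push_neg at h3
        linarith [hηb.2]
      have hlb : ∀ j, j ≤ Lst.length → -(2*D + 1) ≤ τ (p j) := by
        intro j hj
        obtain ⟨η, hηC, hηd⟩ := hCwit (-(D + 1))
        have hηb := abs_le.1 hηd
        have hneg : τ η < 0 := by linarith [hηb.2]
        have h3 : τ η < τ (p j) := (hcross η hηC j hj).2 hneg
        linarith [hηb.1]
      have hgp : g = p Lst.length := by
        rw [hgeq, hp]
        simp
      rw [Set.mem_setOf_eq, hgp]
      exact abs_le.2 ⟨by linarith [hlb Lst.length le_rfl], by linarith [hub Lst.length le_rfl]⟩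
    refine ⟨![U₀, U₁], ?_, ?_, ?_⟩
    · intro i
      fin_cases i
      · simpa using hU₀o
      · simpa using hU₁o
    · apply Set.eq_univ_of_forall
      intro y
      by_cases hy : y ∈ U₁
      · exact Set.mem_iUnion.2 ⟨1, hy⟩
      · have hy' : ¬ ∀ γ : Γ, |τ γ| ≤ W → γ • y ∉ C := hy
        push_neg at hy'
        obtain ⟨γ, h1, h2⟩ := hy'
        exact Set.mem_iUnion.2 ⟨0, ⟨γ, h1, hCV h2⟩⟩
    · intro i
      fin_cases i
      · simpa using hfin₀
      · simpa using hfin₁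
  -- lower bound : ¬ DadLE Γ X 0
  have hDad0 : ¬ DadLE Γ X 0 := by
    intro hdl
    obtain ⟨U, hUo, hUcov, hUfin⟩ := hdl {t₀}
    have hU0 : U 0 = Set.univ := by
      rw [← hUcov]
      apply Set.Subset.antisymm
      · exact Set.subset_iUnion U 0
      · intro y hy
        obtain ⟨i, hi⟩ := Set.mem_iUnion.1 hy
        rwa [Fin.eq_zero i] at hi
    have hinf : (dynF (U 0) (({t₀} : Finset Γ) : Set Γ)).Infinite := by
      rw [hU0]
      apply Set.infinite_of_injective_forall_mem (f := fun k : ℕ => t₀ ^ (k+1))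
      · intro a b hab
        have hpi : Function.Injective fun n : ℤ => t₀ ^ n :=
          injective_zpow_iff_not_isOfFinOrder.2 ht₀
        have hz : t₀ ^ ((a+1 : ℕ) : ℤ) = t₀ ^ ((b+1 : ℕ) : ℤ) := by
          rw [zpow_natCast, zpow_natCast]; exact hab
        have := hpi hz
        omega
      · intro k
        refine ⟨List.replicate (k+1) t₀, by simp, ?_, ?_,
          Classical.arbitrary X, trivial, fun j h1 h2 => trivial⟩
        · intro h hh
          have := List.eq_of_mem_replicate hh
          simp [this]
        · rw [List.reverse_replicate, List.prod_replicate]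
    exact hinf (hUfin 0)
  -- conclusion
  have hmem1 : (1 : ℕ∞) ∈ (fun d : ℕ => (d : ℕ∞)) '' {d : ℕ | DadLE Γ X d} :=
    ⟨1, hDad1, rfl⟩
  refine le_antisymm (sInf_le hmem1) (le_sInf ?_)
  rintro b ⟨d, hd, rfl⟩
  rcases Nat.eq_zero_or_pos d with rfl | hpos
  · exact absurd hd hDad0
  · show (1 : ℕ∞) ≤ (d : ℕ∞)
    exact_mod_cast hpos
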